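/- Assume b > 0. For every ℓ ∈ {0, …, K} and every z with u_ℓ + b·h(ℓ) < z < u_{ℓ+1} + b·h(ℓ) (the lower constraint being vacuous when ℓ = 0 and the upper constraint vacuous when ℓ = K), the point x* = z − b·h(ℓ) is the unique minimizer over ℝ of the function x ↦ b·ρ_C(x) + (x − z)²/2. -/

import Mathlib

/-- Single quantile loss `ρ_{τ,u}(x) = (x − u)(τ − 1{x ≤ u})`. -/
noncomputable def quantLoss (τ u x : ℝ) : ℝ := (x - u) * (τ - if x ≤ u then 1 else 0)

/-- Composite quantile loss `ρ_C(x) = Σ_{k=1}^K w_k ρ_{τ_k,u_k}(x)`. -/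
noncomputable def compLoss (K : ℕ) (τ u w : ℕ → ℝ) (x : ℝ) : ℝ :=
  ∑ k ∈ Finset.Icc 1 K, w k * quantLoss (τ k) (u k) x

/-- `h(ℓ) = Σ_{k=1}^ℓ w_k τ_k − Σ_{k=ℓ+1}^K w_k (1 − τ_k)`. -/
noncomputable def hFun (K : ℕ) (τ w : ℕ → ℝ) (ℓ : ℕ) : ℝ :=
  ∑ k ∈ Finset.Icc 1 ℓ, w k * τ k - ∑ k ∈ Finset.Icc (ℓ + 1) K, w k * (1 - τ k)

lemma quantLoss_subgrad_right (τ u x y : ℝ) (h : u ≤ x) :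
    quantLoss τ u x + τ * (y - x) ≤ quantLoss τ u y := by
  unfold quantLoss
  split_ifs <;> nlinarith

lemma quantLoss_subgrad_left (τ u x y : ℝ) (h : x ≤ u) :
    quantLoss τ u x + (τ - 1) * (y - x) ≤ quantLoss τ u y := by
  unfold quantLoss
  split_ifs <;> nlinarith

theorem prox_composite_quantile_on_open_piece
    (K : ℕ) (hK : 1 ≤ K) (τ u w : ℕ → ℝ)
    (hτ0 : ∀ k ∈ Finset.Icc 1 K, 0 < τ k) (hτ1 : ∀ k ∈ Finset.Icc 1 K, τ k < 1)
    (hτmono : ∀ k, 1 ≤ k → k < K → τ k < τ (k + 1))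
    (humono : ∀ k, 1 ≤ k → k < K → u k < u (k + 1))
    (hw : ∀ k ∈ Finset.Icc 1 K, 0 ≤ w k)
    (hwsum : ∑ k ∈ Finset.Icc 1 K, w k = 1)
    (b : ℝ) (hb : 0 < b)
    (ℓ : ℕ) (hℓ : ℓ ≤ K) (z : ℝ)
    (hz1 : 1 ≤ ℓ → u ℓ + b * hFun K τ w ℓ < z)
    (hz2 : ℓ < K → z < u (ℓ + 1) + b * hFun K τ w ℓ) :
    (∀ y : ℝ,
        b * compLoss K τ u w (z - b * hFun K τ w ℓ) + (z - b * hFun K τ w ℓ - z) ^ 2 / 2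
          ≤ b * compLoss K τ u w y + (y - z) ^ 2 / 2) ∧
    (∀ x : ℝ, (∀ y : ℝ, b * compLoss K τ u w x + (x - z) ^ 2 / 2
          ≤ b * compLoss K τ u w y + (y - z) ^ 2 / 2) → x = z - b * hFun K τ w ℓ) := by
  set H : ℝ := hFun K τ w ℓ with hH
  set x : ℝ := z - b * H with hx
  clear_value x
  -- monotonicity of u on [1, K]
  have umono : ∀ i j : ℕ, 1 ≤ i → i ≤ j → j ≤ K → u i ≤ u j := by
    intro i j hi hij hjK
    induction j, hij using Nat.le_induction with
    | base => exact le_refl _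
    | succ n hn ih =>
        have h1 : u i ≤ u n := ih (le_trans (Nat.le_succ n) hjK)
        have h2 : u n < u (n + 1) := humono n (le_trans hi hn) (Nat.lt_of_succ_le hjK)
        linarith
  -- u k ≤ x for k ≤ ℓ, x ≤ u k for k > ℓ
  have hA : ∀ k ∈ Finset.Icc 1 ℓ, u k ≤ x := by
    intro k hk
    simp only [Finset.mem_Icc] at hk
    have h1 : u k ≤ u ℓ := umono k ℓ hk.1 hk.2 hℓ
    have h2 := hz1 (le_trans hk.1 hk.2)
    simp only [hx]; linarith
  have hB : ∀ k ∈ Finset.Icc (ℓ + 1) K, x ≤ u k := by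
    intro k hk
    simp only [Finset.mem_Icc] at hk
    have hlK : ℓ < K := lt_of_lt_of_le (Nat.lt_of_succ_le hk.1) hk.2
    have h1 : u (ℓ + 1) ≤ u k := umono (ℓ + 1) k (Nat.succ_le_succ (Nat.zero_le _)) hk.1 hk.2
    have h2 := hz2 hlK
    simp only [hx]; linarith
  -- weights nonneg on subranges
  have hw1 : ∀ k ∈ Finset.Icc 1 ℓ, 0 ≤ w k := by
    intro k hk
    simp only [Finset.mem_Icc] at hk
    exact hw k (Finset.mem_Icc.mpr ⟨hk.1, le_trans hk.2 hℓ⟩)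
  have hw2 : ∀ k ∈ Finset.Icc (ℓ + 1) K, 0 ≤ w k := by
    intro k hk
    simp only [Finset.mem_Icc] at hk
    exact hw k (Finset.mem_Icc.mpr ⟨le_trans (Nat.succ_le_succ (Nat.zero_le _)) hk.1, hk.2⟩)
  -- split compLoss
  have hsplit : ∀ v : ℝ, compLoss K τ u w v =
      (∑ k ∈ Finset.Icc 1 ℓ, w k * quantLoss (τ k) (u k) v) +
      (∑ k ∈ Finset.Icc (ℓ + 1) K, w k * quantLoss (τ k) (u k) v) := by
    intro v
    unfold compLoss
    rw [show Finset.Icc 1 K = Finset.Ioc 0 K from Finset.Icc_add_one_left_eq_Ioc 0 K,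
      show Finset.Icc 1 ℓ = Finset.Ioc 0 ℓ from Finset.Icc_add_one_left_eq_Ioc 0 ℓ,
      Finset.Icc_add_one_left_eq_Ioc ℓ K,
      Finset.sum_Ioc_consecutive _ (Nat.zero_le ℓ) hℓ]
  -- subgradient sum inequalities
  have S1 : ∀ y : ℝ,
      (∑ k ∈ Finset.Icc 1 ℓ, w k * quantLoss (τ k) (u k) x)
        + (∑ k ∈ Finset.Icc 1 ℓ, w k * τ k) * (y - x)
      ≤ ∑ k ∈ Finset.Icc 1 ℓ, w k * quantLoss (τ k) (u k) y := by
    intro y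
    rw [Finset.sum_mul, ← Finset.sum_add_distrib]
    apply Finset.sum_le_sum
    intro k hk
    have h1 := quantLoss_subgrad_right (τ k) (u k) x y (hA k hk)
    have h2 := hw1 k hk
    nlinarith [mul_le_mul_of_nonneg_left h1 h2]
  have S2 : ∀ y : ℝ,
      (∑ k ∈ Finset.Icc (ℓ + 1) K, w k * quantLoss (τ k) (u k) x)
        + (∑ k ∈ Finset.Icc (ℓ + 1) K, w k * (τ k - 1)) * (y - x)
      ≤ ∑ k ∈ Finset.Icc (ℓ + 1) K, w k * quantLoss (τ k) (u k) y := by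
    intro y
    rw [Finset.sum_mul, ← Finset.sum_add_distrib]
    apply Finset.sum_le_sum
    intro k hk
    have h1 := quantLoss_subgrad_left (τ k) (u k) x y (hB k hk)
    have h2 := hw2 k hk
    nlinarith [mul_le_mul_of_nonneg_left h1 h2]
  -- the subgradient sums add up to H
  have hHsum : (∑ k ∈ Finset.Icc 1 ℓ, w k * τ k)
      + (∑ k ∈ Finset.Icc (ℓ + 1) K, w k * (τ k - 1)) = H := by
    have : ∑ k ∈ Finset.Icc (ℓ + 1) K, w k * (τ k - 1)
        = -∑ k ∈ Finset.Icc (ℓ + 1) K, w k * (1 - τ k) := by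
      rw [← Finset.sum_neg_distrib]
      exact Finset.sum_congr rfl (fun k _ => by ring)
    rw [this, hH]; unfold hFun; ring
  -- key inequality: f(y) ≥ f(x) + (y - x)^2 / 2
  have key : ∀ y : ℝ,
      b * compLoss K τ u w x + (x - z) ^ 2 / 2 + (y - x) ^ 2 / 2
        ≤ b * compLoss K τ u w y + (y - z) ^ 2 / 2 := by
    intro y
    have h1 := S1 y
    have h2 := S2 y
    have hd : H * (y - x) ≤ compLoss K τ u w y - compLoss K τ u w x := by
      rw [hsplit y, hsplit x, ← hHsum]; nlinarith
    have hbd := mul_le_mul_of_nonneg_left hd hb.le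
    have hq : (y - z) ^ 2 / 2
        = (y - x) ^ 2 / 2 - b * (H * (y - x)) + (x - z) ^ 2 / 2 := by
      rw [hx]; ring
    linarith [hbd]
  constructor
  · intro y
    have := key y
    linarith [sq_nonneg (y - x)]
  · intro x' hmin
    have h1 := hmin x
    have h2 := key x'
    have hsq : (x' - x) ^ 2 ≤ 0 := by linarith
    have : x' - x = 0 := by nlinarith [sq_nonneg (x' - x)]
    linarith
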